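/- arXiv:2204.05667 — 2 statements merged into one kernel-verified Lean document; each statement's English description precedes it below -/
import Mathlib

section
/- Let W₁,…,Wₙ ∈ R^{D×d} be independent random matrices whose entries are i.i.d. with mean 0 and variance 1. Define φₙ(x) = (W₁x ⊙ ⋯ ⊙ Wₙx)/√D, where ⊙ is the entrywise product. Then for all x, y ∈ R^d, E[φₙ(x)ᵀφₙ(y)] = (⟨x,y⟩)ⁿ. -/
open MeasureTheory ProbabilityTheory Finset

private lemma indep_aux
    {Ω : Type*} [MeasureSpace Ω] [IsProbabilityMeasure (ℙ : Measure Ω)]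
    {n D d : ℕ}
    (W : Fin n → Ω → Matrix (Fin D) (Fin d) ℝ)
    (hmeas : ∀ i j k, Measurable fun ω => W i ω j k)
    (hindep : iIndepFun
      (fun p : Fin n × Fin D × Fin d => fun ω => W p.1 ω p.2.1 p.2.2) ℙ)
    (j : Fin D) (x y : Fin d → ℝ) (a : Fin n) (s : Finset (Fin n)) (ha : a ∉ s) :
    IndepFun (fun ω => (∑ k, W a ω j k * x k) * (∑ k, W a ω j k * y k))
      (fun ω => ∏ i ∈ s, ((∑ k, W i ω j k * x k) * (∑ k, W i ω j k * y k))) ℙ := by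
  classical
  set S : Finset (Fin n × Fin D × Fin d) := {a} ×ˢ ({j} ×ˢ univ) with hS
  set T : Finset (Fin n × Fin D × Fin d) := s ×ˢ ({j} ×ˢ univ) with hT
  have hST : Disjoint S T := by
    rw [Finset.disjoint_left]
    rintro ⟨i, j', k⟩ hSm hTm
    simp only [hS, hT, Finset.mem_product, Finset.mem_singleton] at hSm hTm
    exact ha (hSm.1 ▸ hTm.1)
  have h := hindep.indepFun_finset S T hST (fun p => hmeas p.1 p.2.1 p.2.2)
  have hmemS : ∀ k : Fin d, (a, j, k) ∈ S := by
    intro k; simp [hS]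
  have hmemT : ∀ i : s, ∀ k : Fin d, ((i : Fin n), j, k) ∈ T := by
    intro i k; simp [hT, i.2]
  let F : ({p // p ∈ S} → ℝ) → ℝ := fun v =>
    (∑ k, v ⟨(a, j, k), hmemS k⟩ * x k) * (∑ k, v ⟨(a, j, k), hmemS k⟩ * y k)
  let G : ({p // p ∈ T} → ℝ) → ℝ := fun v =>
    ∏ i ∈ s.attach, ((∑ k, v ⟨((i : Fin n), j, k), hmemT i k⟩ * x k) *
      (∑ k, v ⟨((i : Fin n), j, k), hmemT i k⟩ * y k))
  have hF : Measurable F := by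
    apply Measurable.mul <;> exact Finset.measurable_sum _ (fun k _ => (measurable_pi_apply _).mul_const _)
  have hG : Measurable G := by
    apply Finset.measurable_prod
    intro i _
    apply Measurable.mul <;> exact Finset.measurable_sum _ (fun k _ => (measurable_pi_apply _).mul_const _)
  have h2 := h.comp hF hG
  convert h2 using 1
  · funext ω; rfl
  funext ω
  simp only [G, Function.comp_apply]
  rw [← Finset.prod_attach s
    (fun i => ((∑ k, W i ω j k * x k) * (∑ k, W i ω j k * y k)))]


private lemma factor_aux
    {Ω : Type*} [MeasureSpace Ω] [IsProbabilityMeasure (ℙ : Measure Ω)]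
    {n D d : ℕ}
    (W : Fin n → Ω → Matrix (Fin D) (Fin d) ℝ)
    (hmeas : ∀ i j k, Measurable fun ω => W i ω j k)
    (hindep : iIndepFun
      (fun p : Fin n × Fin D × Fin d => fun ω => W p.1 ω p.2.1 p.2.2) ℙ)
    (hmean : ∀ i j k, ∫ ω, W i ω j k = 0)
    (hvar : ∀ i j k, ∫ ω, (W i ω j k) ^ 2 = 1)
    (x y : Fin d → ℝ) (i : Fin n) (j : Fin D) :
    Integrable (fun ω => (∑ k, W i ω j k * x k) * (∑ k, W i ω j k * y k)) ℙ ∧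
    ∫ ω, (∑ k, W i ω j k * x k) * (∑ k, W i ω j k * y k) = ∑ k, x k * y k := by
  classical
  -- squares are integrable
  have hsq : ∀ (i : Fin n) (j : Fin D) (k : Fin d),
      Integrable (fun ω => (W i ω j k) ^ 2) ℙ := by
    intro i j k
    by_contra h
    have h1 := hvar i j k
    rw [integral_undef h] at h1
    exact zero_ne_one h1
  have hL2 : ∀ (i : Fin n) (j : Fin D) (k : Fin d),
      MemLp (fun ω => W i ω j k) 2 ℙ := fun i j k =>
    (memLp_two_iff_integrable_sq (hmeas i j k).aestronglyMeasurable).mpr (hsq i j k)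
  have hInt1 : ∀ (i : Fin n) (j : Fin D) (k : Fin d),
      Integrable (fun ω => W i ω j k) ℙ := fun i j k =>
    (hL2 i j k).integrable one_le_two
  -- term integrability
  have hterm : ∀ k k' : Fin d,
      Integrable (fun ω => W i ω j k * W i ω j k') ℙ := by
    intro k k'
    rcases eq_or_ne k k' with rfl | hkk
    · exact (hsq i j k).congr (by filter_upwards with ω; rw [sq])
    · have hind : IndepFun (fun ω => W i ω j k) (fun ω => W i ω j k') ℙ :=
        hindep.indepFun (show ((i,j,k) : Fin n × Fin D × Fin d) ≠ (i,j,k') by simpa using hkk)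
      exact hind.integrable_mul (hInt1 i j k) (hInt1 i j k')
  have hexp : ∀ ω, (∑ k, W i ω j k * x k) * (∑ k, W i ω j k * y k)
      = ∑ k, ∑ k', (W i ω j k * W i ω j k') * (x k * y k') := by
    intro ω
    rw [Finset.sum_mul_sum]
    refine Finset.sum_congr rfl fun k _ => Finset.sum_congr rfl fun k' _ => by ring
  constructor
  · apply (integrable_finset_sum _ fun k _ => integrable_finset_sum _ fun k' _ =>
      (hterm k k').mul_const _).congr
    filter_upwards with ω
    exact (hexp ω).symm
  · have : ∫ ω, (∑ k, W i ω j k * x k) * (∑ k, W i ω j k * y k)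
        = ∑ k, ∑ k', (∫ ω, W i ω j k * W i ω j k') * (x k * y k') := by
      simp_rw [hexp]
      rw [integral_finset_sum _ fun k _ => integrable_finset_sum _ fun k' _ =>
        (hterm k k').mul_const _]
      refine Finset.sum_congr rfl fun k _ => ?_
      rw [integral_finset_sum _ fun k' _ => (hterm k k').mul_const _]
      exact Finset.sum_congr rfl fun k' _ => integral_mul_const _ _
    rw [this]
    have hc : ∀ k k' : Fin d, (∫ ω, W i ω j k * W i ω j k')
        = if k = k' then (1 : ℝ) else 0 := by
      intro k k'
      rcases eq_or_ne k k' with rfl | hkk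
      · rw [if_pos rfl, ← hvar i j k]
        exact integral_congr_ae (by filter_upwards with ω; rw [sq])
      · rw [if_neg hkk]
        have hind : IndepFun (fun ω => W i ω j k) (fun ω => W i ω j k') ℙ :=
          hindep.indepFun (show ((i,j,k) : Fin n × Fin D × Fin d) ≠ (i,j,k') by simpa using hkk)
        have h2 := hind.integral_fun_mul_eq_mul_integral (hInt1 i j k).aestronglyMeasurable (hInt1 i j k').aestronglyMeasurable
        simpa [hmean i j k] using h2
    simp_rw [hc, ite_mul, one_mul, zero_mul, Finset.sum_ite_eq, Finset.mem_univ, if_pos]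


private lemma prod_aux
    {Ω : Type*} [MeasureSpace Ω] [IsProbabilityMeasure (ℙ : Measure Ω)]
    {n D d : ℕ}
    (W : Fin n → Ω → Matrix (Fin D) (Fin d) ℝ)
    (hmeas : ∀ i j k, Measurable fun ω => W i ω j k)
    (hindep : iIndepFun
      (fun p : Fin n × Fin D × Fin d => fun ω => W p.1 ω p.2.1 p.2.2) ℙ)
    (hmean : ∀ i j k, ∫ ω, W i ω j k = 0)
    (hvar : ∀ i j k, ∫ ω, (W i ω j k) ^ 2 = 1)
    (x y : Fin d → ℝ) (j : Fin D) (s : Finset (Fin n)) :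
    Integrable (fun ω => ∏ i ∈ s, ((∑ k, W i ω j k * x k) * (∑ k, W i ω j k * y k))) ℙ ∧
    ∫ ω, ∏ i ∈ s, ((∑ k, W i ω j k * x k) * (∑ k, W i ω j k * y k))
      = (∑ k, x k * y k) ^ s.card := by
  classical
  induction s using Finset.induction_on with
  | empty => simp
  | @insert a s ha ih =>
    have hind := indep_aux W hmeas hindep j x y a s ha
    have hfa := factor_aux W hmeas hindep hmean hvar x y a j
    constructor
    · have := hind.integrable_mul hfa.1 ih.1
      apply this.congr
      filter_upwards with ω
      simp [Finset.prod_insert ha]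
    · have h2 := hind.integral_fun_mul_eq_mul_integral hfa.1.aestronglyMeasurable ih.1.aestronglyMeasurable
      have h3 : ∫ ω, ∏ i ∈ insert a s, ((∑ k, W i ω j k * x k) * (∑ k, W i ω j k * y k))
          = ∫ ω, ((∑ k, W a ω j k * x k) * (∑ k, W a ω j k * y k)) *
              ∏ i ∈ s, ((∑ k, W i ω j k * x k) * (∑ k, W i ω j k * y k)) := by
        refine integral_congr_ae ?_
        filter_upwards with ω
        rw [Finset.prod_insert ha]
      rw [h3]
      calc ∫ ω, ((∑ k, W a ω j k * x k) * (∑ k, W a ω j k * y k)) *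
              ∏ i ∈ s, ((∑ k, W i ω j k * x k) * (∑ k, W i ω j k * y k))
          = (∫ ω, ((∑ k, W a ω j k * x k) * (∑ k, W a ω j k * y k))) *
            ∫ ω, ∏ i ∈ s, ((∑ k, W i ω j k * x k) * (∑ k, W i ω j k * y k)) := h2
        _ = (∑ k, x k * y k) ^ (insert a s).card := by
            rw [hfa.2, ih.2, Finset.card_insert_of_notMem ha, pow_succ, mul_comm]

/-- unbiasedness of the polynomial sketch. If `W₁,…,Wₙ ∈ ℝ^{D×d}` are
    random matrices whose entries are (jointly) i.i.d. with mean `0` and variance `1`,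
    and `φₙ(x) = (W₁x ⊙ ⋯ ⊙ Wₙx)/√D`, then `E[φₙ(x)ᵀφₙ(y)] = ⟨x,y⟩ⁿ`. -/
theorem polynomial_sketch_unbiased
    {Ω : Type*} [MeasureSpace Ω] [IsProbabilityMeasure (ℙ : Measure Ω)]
    (n D d : ℕ) (hD : 0 < D)
    (W : Fin n → Ω → Matrix (Fin D) (Fin d) ℝ)
    (hmeas : ∀ i j k, Measurable fun ω => W i ω j k)
    (hindep : iIndepFun
      (fun p : Fin n × Fin D × Fin d => fun ω => W p.1 ω p.2.1 p.2.2) ℙ)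
    (hident : ∀ (i i' : Fin n) (j j' : Fin D) (k k' : Fin d),
      Measure.map (fun ω => W i ω j k) ℙ = Measure.map (fun ω => W i' ω j' k') ℙ)
    (hmean : ∀ i j k, ∫ ω, W i ω j k = 0)
    (hvar : ∀ i j k, ∫ ω, (W i ω j k) ^ 2 = 1)
    (x y : Fin d → ℝ) :
    (∫ ω, (∑ j : Fin D,
        (∏ i : Fin n, ∑ k : Fin d, W i ω j k * x k) *
        (∏ i : Fin n, ∑ k : Fin d, W i ω j k * y k)) / D) =
      (∑ k : Fin d, x k * y k) ^ n := by
  classical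
  have hsplit : ∀ (j : Fin D) (ω : Ω),
      (∏ i : Fin n, ∑ k : Fin d, W i ω j k * x k) *
        (∏ i : Fin n, ∑ k : Fin d, W i ω j k * y k)
      = ∏ i : Fin n, ((∑ k, W i ω j k * x k) * (∑ k, W i ω j k * y k)) := by
    intro j ω
    rw [Finset.prod_mul_distrib]
  have hpa := fun j => prod_aux W hmeas hindep hmean hvar x y j Finset.univ
  have hInt : ∀ j : Fin D, Integrable (fun ω =>
      (∏ i : Fin n, ∑ k : Fin d, W i ω j k * x k) *
      (∏ i : Fin n, ∑ k : Fin d, W i ω j k * y k)) ℙ := by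
    intro j
    apply (hpa j).1.congr
    filter_upwards with ω
    exact (hsplit j ω).symm
  rw [integral_div, integral_finset_sum _ fun j _ => hInt j]
  have hval : ∀ j : Fin D, ∫ ω,
      (∏ i : Fin n, ∑ k : Fin d, W i ω j k * x k) *
      (∏ i : Fin n, ∑ k : Fin d, W i ω j k * y k)
      = (∑ k, x k * y k) ^ n := by
    intro j
    have := (hpa j).2
    rw [Finset.card_univ, Fintype.card_fin] at this
    rw [← this]
    exact integral_congr_ae (by filter_upwards with ω; exact hsplit j ω)
  simp_rw [hval]
  rw [Finset.sum_const, Finset.card_univ, Fintype.card_fin, nsmul_eq_mul]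
  rw [mul_comm, mul_div_assoc, div_self (Nat.cast_ne_zero.mpr hD.ne' : (D:ℝ) ≠ 0), mul_one]
end

section
/- For the Rademacher polynomial sketch φₙ(x) = (W₁x ⊙ ⋯ ⊙ Wₙx)/√D with independent Wᵢ having i.i.d. Unif({−1,+1}) entries, the variance of the kernel estimate is Var[φₙ(x)ᵀφₙ(y)] = D^{-1}[(‖x‖²‖y‖² + 2((⟨x,y⟩)² − Σ_{k=1}^d x_k² y_k²))ⁿ − (⟨x,y⟩)^{2ن}]. -/
open MeasureTheory ProbabilityTheory

section RSauxiliary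
open Finset

section RSaux
variable {Ω : Type*} [MeasureSpace Ω] [IsProbabilityMeasure (ℙ : Measure Ω)]

lemma RSaux_integrable_of_bound {f : Ω → ℝ} (hm : Measurable f) (C : ℝ)
    (h : ∀ ω, |f ω| ≤ C) : Integrable f ℙ :=
  (memLp_top_of_bound hm.aestronglyMeasurable C
    (Filter.Eventually.of_forall (by simpa using h))).integrable le_top

lemma RSaux_integral_prod_eq {ι : Type*} {f : ι → Ω → ℝ}
    (hindep : iIndepFun f ℙ) (hmeas : ∀ i, Measurable (f i))
    (s : Finset ι) : ∫ ω, ∏ i ∈ s, f i ω = ∏ i ∈ s, ∫ ω, f i ω := by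
  classical
  induction s using Finset.induction_on with
  | empty => simp
  | insert a s hi ih =>
    rw [Finset.prod_insert hi]
    have hIndep : IndepFun (f a) (∏ j ∈ s, f j) ℙ :=
      (hindep.indepFun_finsetProd_of_notMem hmeas hi).symm
    have hsm : AEStronglyMeasurable (∏ j ∈ s, f j) ℙ := by
      have : Measurable (∏ j ∈ s, f j) := by
        rw [show (∏ j ∈ s, f j) = fun ω => ∏ j ∈ s, f j ω from funext fun ω => by
          simp [Finset.prod_apply]]
        exact s.measurable_prod fun i _ => hmeas i
      exact this.aestronglyMeasurable
    have key := hIndep.integral_mul_eq_mul_integral (hmeas a).aestronglyMeasurable hsm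
    have e1 : (f a * ∏ j ∈ s, f j) = fun ω => f a ω * ∏ i ∈ s, f i ω :=
      funext fun ω => by simp [Finset.prod_apply]
    have e2 : integral ℙ (∏ j ∈ s, f j) = ∫ ω, ∏ i ∈ s, f i ω := by
      congr 1; exact funext fun ω => by simp [Finset.prod_apply]
    rw [e1] at key
    rw [show (∫ ω, ∏ i ∈ insert a s, f i ω) = ∫ ω, f a ω * ∏ i ∈ s, f i ω by
      simp [Finset.prod_insert hi]]
    rw [key, e2, ih]

lemma RSaux_mom {ι : Type*} [Fintype ι] {ε : ι → Ω → ℝ}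
    (hindep : iIndepFun ε ℙ) (hmeas : ∀ p, Measurable (ε p))
    (hsign : ∀ p ω, ε p ω = 1 ∨ ε p ω = -1) (hmean : ∀ p, ∫ ω, ε p ω = 0)
    (m : ι → ℕ) :
    ∫ ω, ∏ p, ε p ω ^ m p = ∏ p, (if Even (m p) then (1:ℝ) else 0) := by
  classical
  have hsq : ∀ p ω, ε p ω ^ 2 = 1 := fun p ω => by
    rcases hsign p ω with h | h <;> rw [h] <;> norm_num
  have h1 : iIndepFun (fun p ω => ε p ω ^ m p) ℙ :=
    hindep.comp (fun p t => t ^ m p) (fun p => measurable_id.pow_const _)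
  rw [RSaux_integral_prod_eq h1 (fun p => (hmeas p).pow_const _) Finset.univ]
  refine Finset.prod_congr rfl fun p _ => ?_
  rcases Nat.even_or_odd (m p) with he | ho
  · rw [if_pos he]
    obtain ⟨k, hk⟩ := he
    have : (fun ω => ε p ω ^ m p) = fun _ => (1:ℝ) := funext fun ω => by
      rw [hk, show k + k = 2 * k by ring, pow_mul, hsq p ω, one_pow]
    rw [this]; simp
  · rw [if_neg (Nat.not_even_iff_odd.mpr ho)]
    obtain ⟨k, hk⟩ := ho
    have : (fun ω => ε p ω ^ m p) = fun ω => ε p ω := funext fun ω => by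
      rw [hk, pow_add, pow_mul, hsq p ω, one_pow, pow_one, one_mul]
    rw [this]; exact hmean p

end RSaux

lemma RSaux_prod_pow_ite {κ : Type*} [Fintype κ] [DecidableEq κ] (f : κ → ℝ) (q : κ) :
    ∏ r, f r ^ (if r = q then 1 else 0) = f q := by
  simp [pow_ite, Finset.prod_ite_eq']


lemma RSaux_pairProd {κ : Type*} [Fintype κ] [DecidableEq κ] (u v : κ) :
    (∏ r : κ, if Even ((if r = u then 1 else 0) + (if r = v then 1 else 0)) then (1:ℝ) else 0)
      = if u = v then 1 else 0 := by
  by_cases huv : u = v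
  · subst huv
    rw [if_pos rfl]
    refine Finset.prod_eq_one fun r _ => ?_
    exact if_pos ⟨(if r = u then 1 else 0), by ring⟩
  · rw [if_neg huv]
    refine Finset.prod_eq_zero (Finset.mem_univ u) (if_neg ?_)
    rw [if_pos rfl, if_neg huv]
    decide

lemma RSaux_quadProd {κ : Type*} [Fintype κ] [DecidableEq κ] (u v w z : κ) :
    (∏ r : κ, if Even ((if r = u then 1 else 0) + (if r = v then 1 else 0)
        + (if r = w then 1 else 0) + (if r = z then 1 else 0)) then (1:ℝ) else 0)
      = (if u = v then 1 else 0) * (if w = z then 1 else 0)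
        + (if u = w then 1 else 0) * (if v = z then 1 else 0)
        + (if u = z then 1 else 0) * (if v = w then 1 else 0)
        - 2 * ((if u = v then 1 else 0) * (if v = w then 1 else 0) * (if w = z then 1 else 0)) := by
  by_cases huv : u = v <;> by_cases hwz : w = z
  · -- u=v, w=z : LHS = 1
    subst huv; subst hwz
    have lhs : (∏ r : κ, if Even ((if r = u then 1 else 0) + (if r = u then 1 else 0)
        + (if r = w then 1 else 0) + (if r = w then 1 else 0)) then (1:ℝ) else 0) = 1 :=
      Finset.prod_eq_one fun r _ =>
        if_pos ⟨(if r = u then 1 else 0) + (if r = w then 1 else 0), by ring⟩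
    rw [lhs]
    by_cases huw : u = w <;> simp [huw] <;> ring
  · -- u=v, w≠z : LHS = 0
    subst huv
    have lhs : (∏ r : κ, if Even ((if r = u then 1 else 0) + (if r = u then 1 else 0)
        + (if r = w then 1 else 0) + (if r = z then 1 else 0)) then (1:ℝ) else 0) = 0 := by
      refine Finset.prod_eq_zero (Finset.mem_univ w) (if_neg ?_)
      rw [if_pos rfl, if_neg hwz]
      by_cases h : w = u <;> simp [h] <;> decide
    rw [lhs]
    have huwz : ¬(u = w ∧ u = z) := fun ⟨h1, h2⟩ => hwz (h1 ▸ h2 ▸ rfl)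
    by_cases h1 : u = w <;> by_cases h2 : u = z <;> simp_all <;> ring
  · -- u≠v, w=z : LHS = 0
    subst hwz
    have lhs : (∏ r : κ, if Even ((if r = u then 1 else 0) + (if r = v then 1 else 0)
        + (if r = w then 1 else 0) + (if r = w then 1 else 0)) then (1:ℝ) else 0) = 0 := by
      refine Finset.prod_eq_zero (Finset.mem_univ u) (if_neg ?_)
      rw [if_pos rfl, if_neg huv]
      by_cases h : u = w <;> simp [h] <;> decide
    rw [lhs]
    by_cases h1 : u = w <;> by_cases h2 : v = w <;> simp_all <;> ring
  · -- u≠v, w≠z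
    by_cases huw : u = w
    · subst huw
      by_cases hvz : v = z
      · subst hvz
        have lhs : (∏ r : κ, if Even ((if r = u then 1 else 0) + (if r = v then 1 else 0)
            + (if r = u then 1 else 0) + (if r = v then 1 else 0)) then (1:ℝ) else 0) = 1 :=
          Finset.prod_eq_one fun r _ =>
            if_pos ⟨(if r = u then 1 else 0) + (if r = v then 1 else 0), by ring⟩
        rw [lhs]
        simp [if_neg huv, if_neg hwz]
      · have lhs : (∏ r : κ, if Even ((if r = u then 1 else 0) + (if r = v then 1 else 0)
            + (if r = u then 1 else 0) + (if r = z then 1 else 0)) then (1:ℝ) else 0) = 0 := by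
          refine Finset.prod_eq_zero (Finset.mem_univ v) (if_neg ?_)
          have h1 : ¬v = u := fun h => huv h.symm
          rw [if_neg h1, if_pos rfl, if_neg hvz]
          decide
        rw [lhs]
        have h1 : ¬v = u := fun h => huv h.symm
        simp [if_neg huv, if_neg hwz, if_neg hvz, if_neg h1]
    · by_cases huz : u = z
      · subst huz
        by_cases hvw : v = w
        · subst hvw
          have lhs : (∏ r : κ, if Even ((if r = u then 1 else 0) + (if r = v then 1 else 0)
              + (if r = v then 1 else 0) + (if r = u then 1 else 0)) then (1:ℝ) else 0) = 1 :=
            Finset.prod_eq_one fun r _ =>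
              if_pos ⟨(if r = u then 1 else 0) + (if r = v then 1 else 0), by ring⟩
          rw [lhs]
          simp [if_neg huv, if_neg hwz, if_neg huw]
        · have lhs : (∏ r : κ, if Even ((if r = u then 1 else 0) + (if r = v then 1 else 0)
              + (if r = w then 1 else 0) + (if r = u then 1 else 0)) then (1:ℝ) else 0) = 0 := by
            refine Finset.prod_eq_zero (Finset.mem_univ v) (if_neg ?_)
            have h1 : ¬v = u := fun h => huv h.symm
            rw [if_neg h1, if_pos rfl, if_neg hvw]
            decide
          rw [lhs]
          have h1 : ¬v = u := fun h => huv h.symm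
          simp [if_neg huv, if_neg hwz, if_neg huw, if_neg hvw]
      · have lhs : (∏ r : κ, if Even ((if r = u then 1 else 0) + (if r = v then 1 else 0)
            + (if r = w then 1 else 0) + (if r = z then 1 else 0)) then (1:ℝ) else 0) = 0 := by
          refine Finset.prod_eq_zero (Finset.mem_univ u) (if_neg ?_)
          have h1 : ¬u = v := huv
          rw [if_pos rfl, if_neg h1, if_neg huw, if_neg huz]
          decide
        rw [lhs]
        simp [if_neg huv, if_neg huw, if_neg huz]


lemma RSaux_pairSum {d : ℕ} (x y : Fin d → ℝ) :
    (∑ a, ∑ b, (if a = b then (1:ℝ) else 0) * (x a * y b)) = ∑ k, x k * y k := by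
  simp [ite_mul, zero_mul, one_mul, Finset.sum_ite_eq, Finset.sum_ite_eq']

lemma RSaux_quadSum {d : ℕ} (x y : Fin d → ℝ) :
    (∑ a, ∑ b, ∑ c, ∑ e,
      ((if a = b then (1:ℝ) else 0) * (if c = e then 1 else 0)
        + (if a = c then 1 else 0) * (if b = e then 1 else 0)
        + (if a = e then 1 else 0) * (if b = c then 1 else 0)
        - 2 * ((if a = b then 1 else 0) * (if b = c then 1 else 0) * (if c = e then 1 else 0)))
      * (x a * y b * x c * y e))
    = (∑ k, x k ^ 2) * (∑ k, y k ^ 2)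
      + 2 * ((∑ k, x k * y k) ^ 2 - ∑ k, x k ^ 2 * y k ^ 2) := by
  have expand : ∀ a b c e : Fin d,
      ((if a = b then (1:ℝ) else 0) * (if c = e then 1 else 0)
        + (if a = c then 1 else 0) * (if b = e then 1 else 0)
        + (if a = e then 1 else 0) * (if b = c then 1 else 0)
        - 2 * ((if a = b then 1 else 0) * (if b = c then 1 else 0) * (if c = e then 1 else 0)))
      * (x a * y b * x c * y e)
      = (if a = b then (1:ℝ) else 0) * (if c = e then 1 else 0) * (x a * y b * x c * y e)
        + (if a = c then 1 else 0) * (if b = e then 1 else 0) * (x a * y b * x c * y e)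
        + (if a = e then 1 else 0) * (if b = c then 1 else 0) * (x a * y b * x c * y e)
        - 2 * ((if a = b then 1 else 0) * (if b = c then 1 else 0) * (if c = e then 1 else 0)
            * (x a * y b * x c * y e)) := by
    intros; ring
  simp only [expand, Finset.sum_add_distrib, Finset.sum_sub_distrib, ← Finset.mul_sum]
  have T1 : (∑ a, ∑ b, ∑ c, ∑ e, (if a = b then (1:ℝ) else 0) * (if c = e then 1 else 0)
      * (x a * y b * x c * y e)) = (∑ k, x k * y k) ^ 2 := by
    rw [sq]
    simp [ite_mul, zero_mul, one_mul, mul_ite, mul_zero, Finset.sum_ite_eq, Finset.sum_ite_eq',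
      Finset.mul_sum, Finset.sum_mul]
    exact Finset.sum_congr rfl fun _ _ => Finset.sum_congr rfl fun _ _ => by ring
  have T2 : (∑ a, ∑ b, ∑ c, ∑ e, (if a = c then (1:ℝ) else 0) * (if b = e then 1 else 0)
      * (x a * y b * x c * y e)) = (∑ k, x k ^ 2) * (∑ k, y k ^ 2) := by
    simp [ite_mul, zero_mul, one_mul, mul_ite, mul_zero, Finset.sum_ite_eq, Finset.sum_ite_eq',
      Finset.mul_sum, Finset.sum_mul, sq]
    rw [Finset.sum_comm]
    exact Finset.sum_congr rfl fun _ _ => Finset.sum_congr rfl fun _ _ => by ring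
  have T3 : (∑ a, ∑ b, ∑ c, ∑ e, (if a = e then (1:ℝ) else 0) * (if b = c then 1 else 0)
      * (x a * y b * x c * y e)) = (∑ k, x k * y k) ^ 2 := by
    rw [sq]
    simp [ite_mul, zero_mul, one_mul, mul_ite, mul_zero, Finset.sum_ite_eq, Finset.sum_ite_eq',
      Finset.mul_sum, Finset.sum_mul]
    exact Finset.sum_congr rfl fun _ _ => Finset.sum_congr rfl fun _ _ => by ring
  have T4 : (∑ a, ∑ b, ∑ c, ∑ e, (if a = b then (1:ℝ) else 0) * (if b = c then 1 else 0)
      * (if c = e then 1 else 0) * (x a * y b * x c * y e)) = ∑ k, x k ^ 2 * y k ^ 2 := by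
    simp [ite_mul, zero_mul, one_mul, mul_ite, mul_zero, Finset.sum_ite_eq, Finset.sum_ite_eq', sq]
    exact Finset.sum_congr rfl fun _ _ => by ring
  rw [T1, T2, T3, T4]
  ring


lemma RSaux_pairSum2 {d : ℕ} (x y : Fin d → ℝ) :
    (∑ a, ∑ b, ∑ c, ∑ e, ((if a = b then (1:ℝ) else 0) * (if c = e then 1 else 0))
      * (x a * y b * x c * y e)) = (∑ k, x k * y k) ^ 2 := by
  rw [sq]
  simp [ite_mul, zero_mul, one_mul, mul_ite, mul_zero, Finset.sum_ite_eq, Finset.sum_ite_eq',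
    Finset.mul_sum, Finset.sum_mul]
  exact Finset.sum_congr rfl fun _ _ => Finset.sum_congr rfl fun _ _ => by ring

lemma RSaux_ES {Ω : Type*} [MeasureSpace Ω] [IsProbabilityMeasure (ℙ : Measure Ω)]
    {n D d : ℕ} {ε : Fin n × Fin D × Fin d → Ω → ℝ}
    (hindep : iIndepFun ε ℙ) (hmeas : ∀ p, Measurable (ε p))
    (hsign : ∀ p ω, ε p ω = 1 ∨ ε p ω = -1) (hmean : ∀ p, ∫ ω, ε p ω = 0)
    (x y : Fin d → ℝ) (j : Fin D) :
    ∫ ω, (∏ i, ∑ k, ε (i, j, k) ω * x k) * (∏ i, ∑ k, ε (i, j, k) ω * y k) =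
      (∑ k, x k * y k) ^ n := by
  classical
  have habs : ∀ p ω, |ε p ω| = 1 := fun p ω => by rcases hsign p ω with h | h <;> simp [h]
  set Epart : Fin n → Fin d × Fin d → Ω → ℝ := fun i q ω =>
    ε (i, j, q.1) ω * ε (i, j, q.2) ω with hE
  set Cpart : Fin d × Fin d → ℝ := fun q => x q.1 * y q.2 with hC
  have hpoint : ∀ ω : Ω,
      (∏ i, ∑ k, ε (i, j, k) ω * x k) * (∏ i, ∑ k, ε (i, j, k) ω * y k)
      = ∑ h : Fin n → Fin d × Fin d, (∏ i, Epart i (h i) ω) * (∏ i, Cpart (h i)) := by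
    intro ω
    have e1 : (∏ i, ∑ k, ε (i, j, k) ω * x k) * (∏ i, ∑ k, ε (i, j, k) ω * y k)
        = ∏ i, ∑ q : Fin d × Fin d, Epart i q ω * Cpart q := by
      simp only [← Finset.prod_mul_distrib]
      refine Finset.prod_congr rfl fun i _ => ?_
      rw [show (∑ q : Fin d × Fin d, Epart i q ω * Cpart q)
          = ∑ a, ∑ b, Epart i (a, b) ω * Cpart (a, b) by
        simp only [Fintype.sum_prod_type]]
      rw [Finset.sum_mul_sum]
      refine Finset.sum_congr rfl fun a _ => Finset.sum_congr rfl fun b _ => by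
        simp only [hE, hC]; ring
    rw [e1, Finset.prod_univ_sum (fun _ => (Finset.univ : Finset (Fin d × Fin d))),
      Fintype.piFinset_univ]
    exact Finset.sum_congr rfl fun h _ => Finset.prod_mul_distrib
  have hEmeas : ∀ h : Fin n → Fin d × Fin d,
      Measurable fun ω => ∏ i, Epart i (h i) ω := fun h =>
    Finset.measurable_prod _ fun i _ => (hmeas _).mul (hmeas _)
  have hEbd : ∀ (h : Fin n → Fin d × Fin d) ω, |∏ i, Epart i (h i) ω| ≤ 1 := by
    intro h ω
    rw [Finset.abs_prod]
    refine Finset.prod_le_one (fun i _ => abs_nonneg _) fun i _ => ?_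
    simp only [hE, abs_mul, habs]
    norm_num
  have hEint : ∀ h : Fin n → Fin d × Fin d,
      Integrable (fun ω => (∏ i, Epart i (h i) ω) * (∏ i, Cpart (h i))) ℙ := fun h =>
    (RSaux_integrable_of_bound (hEmeas h) 1 (hEbd h)).mul_const _
  have hM : ∀ h : Fin n → Fin d × Fin d,
      ∫ ω, ∏ i, Epart i (h i) ω = ∏ i, (if (h i).1 = (h i).2 then (1:ℝ) else 0) := by
    intro h
    set m : Fin n × Fin D × Fin d → ℕ := fun p =>
      (if p.2 = (j, (h p.1).1) then 1 else 0) + (if p.2 = (j, (h p.1).2) then 1 else 0)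
      with hm_def
    have canon : (fun ω => ∏ i, Epart i (h i) ω) = fun ω => ∏ p, ε p ω ^ m p := by
      funext ω
      rw [Fintype.prod_prod_type (fun p : Fin n × (Fin D × Fin d) => ε p ω ^ m p)]
      refine Finset.prod_congr rfl fun i _ => ?_
      simp only [hm_def, pow_add, Finset.prod_mul_distrib]
      rw [RSaux_prod_pow_ite (fun r => ε (i, r) ω) (j, (h i).1),
        RSaux_prod_pow_ite (fun r => ε (i, r) ω) (j, (h i).2)]
    rw [show (∫ ω, ∏ i, Epart i (h i) ω) = ∫ ω, ∏ p, ε p ω ^ m p by rw [canon],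
      RSaux_mom hindep hmeas hsign hmean m,
      Fintype.prod_prod_type (fun p : Fin n × (Fin D × Fin d) => if Even (m p) then (1:ℝ) else 0)]
    refine Finset.prod_congr rfl fun i _ => ?_
    have := RSaux_pairProd ((j, (h i).1) : Fin D × Fin d) (j, (h i).2)
    simp only [hm_def] at this ⊢
    rw [this]
    simp [Prod.ext_iff]
  rw [integral_congr_ae (Filter.Eventually.of_forall hpoint),
    integral_finset_sum _ fun h _ => hEint h]
  have step : ∀ h : Fin n → Fin d × Fin d,
      (∫ ω, (∏ i, Epart i (h i) ω) * (∏ i, Cpart (h i)))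
        = ∏ i, ((if (h i).1 = (h i).2 then (1:ℝ) else 0) * Cpart (h i)) := by
    intro h
    rw [integral_mul_const, hM h, ← Finset.prod_mul_distrib]
  simp only [step]
  have fold : (∑ h : Fin n → Fin d × Fin d,
        ∏ i, ((if (h i).1 = (h i).2 then (1:ℝ) else 0) * Cpart (h i)))
      = ∏ i : Fin n, (∑ q : Fin d × Fin d, (if q.1 = q.2 then (1:ℝ) else 0) * Cpart q) := by
    rw [Finset.prod_univ_sum (fun _ => (Finset.univ : Finset (Fin d × Fin d))),
      Fintype.piFinset_univ]
  rw [fold]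
  have inner : (∑ q : Fin d × Fin d, (if q.1 = q.2 then (1:ℝ) else 0) * Cpart q)
      = ∑ k, x k * y k := by
    rw [← RSaux_pairSum x y]
    simp only [hC, Fintype.sum_prod_type]
  rw [inner]
  simp [Finset.prod_const]

lemma RSaux_ESS {Ω : Type*} [MeasureSpace Ω] [IsProbabilityMeasure (ℙ : Measure Ω)]
    {n D d : ℕ} {ε : Fin n × Fin D × Fin d → Ω → ℝ}
    (hindep : iIndepFun ε ℙ) (hmeas : ∀ p, Measurable (ε p))
    (hsign : ∀ p ω, ε p ω = 1 ∨ ε p ω = -1) (hmean : ∀ p, ∫ ω, ε p ω = 0)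
    (x y : Fin d → ℝ) (j j' : Fin D) :
    ∫ ω, ((∏ i, ∑ k, ε (i, j, k) ω * x k) * (∏ i, ∑ k, ε (i, j, k) ω * y k)) *
        ((∏ i, ∑ k, ε (i, j', k) ω * x k) * (∏ i, ∑ k, ε (i, j', k) ω * y k)) =
      (if j = j' then
          (∑ k, x k ^ 2) * (∑ k, y k ^ 2) + 2 * ((∑ k, x k * y k) ^ 2 - ∑ k, x k ^ 2 * y k ^ 2)
        else (∑ k, x k * y k) ^ 2) ^ n := by
  classical
  have habs : ∀ p ω, |ε p ω| = 1 := fun p ω => by rcases hsign p ω with h | h <;> simp [h]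
  set Epart : Fin n → Fin d × Fin d × Fin d × Fin d → Ω → ℝ := fun i q ω =>
    ε (i, j, q.1) ω * ε (i, j, q.2.1) ω * ε (i, j', q.2.2.1) ω * ε (i, j', q.2.2.2) ω with hE
  set Cpart : Fin d × Fin d × Fin d × Fin d → ℝ :=
    fun q => x q.1 * y q.2.1 * x q.2.2.1 * y q.2.2.2 with hC
  set Wpart : Fin d × Fin d × Fin d × Fin d → ℝ := fun q =>
    (if ((j, q.1) : Fin D × Fin d) = (j, q.2.1) then (1:ℝ) else 0)
        * (if ((j', q.2.2.1) : Fin D × Fin d) = (j', q.2.2.2) then 1 else 0)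
      + (if ((j, q.1) : Fin D × Fin d) = (j', q.2.2.1) then 1 else 0)
        * (if ((j, q.2.1) : Fin D × Fin d) = (j', q.2.2.2) then 1 else 0)
      + (if ((j, q.1) : Fin D × Fin d) = (j', q.2.2.2) then 1 else 0)
        * (if ((j, q.2.1) : Fin D × Fin d) = (j', q.2.2.1) then 1 else 0)
      - 2 * ((if ((j, q.1) : Fin D × Fin d) = (j, q.2.1) then 1 else 0)
        * (if ((j, q.2.1) : Fin D × Fin d) = (j', q.2.2.1) then 1 else 0)
        * (if ((j', q.2.2.1) : Fin D × Fin d) = (j', q.2.2.2) then 1 else 0)) with hW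
  -- pointwise expansion
  have hpoint : ∀ ω : Ω,
      ((∏ i, ∑ k, ε (i, j, k) ω * x k) * (∏ i, ∑ k, ε (i, j, k) ω * y k)) *
        ((∏ i, ∑ k, ε (i, j', k) ω * x k) * (∏ i, ∑ k, ε (i, j', k) ω * y k))
      = ∑ h : Fin n → Fin d × Fin d × Fin d × Fin d,
          (∏ i, Epart i (h i) ω) * (∏ i, Cpart (h i)) := by
    intro ω
    have e1 : ((∏ i, ∑ k, ε (i, j, k) ω * x k) * (∏ i, ∑ k, ε (i, j, k) ω * y k)) *
        ((∏ i, ∑ k, ε (i, j', k) ω * x k) * (∏ i, ∑ k, ε (i, j', k) ω * y k))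
        = ∏ i, ∑ q : Fin d × Fin d × Fin d × Fin d, Epart i q ω * Cpart q := by
      simp only [← Finset.prod_mul_distrib]
      refine Finset.prod_congr rfl fun i _ => ?_
      rw [show (∑ q : Fin d × Fin d × Fin d × Fin d, Epart i q ω * Cpart q)
          = ∑ a, ∑ b, ∑ c, ∑ e, Epart i (a, b, c, e) ω * Cpart (a, b, c, e) by
        simp only [Fintype.sum_prod_type]]
      rw [Finset.sum_mul_sum Finset.univ Finset.univ
          (fun k => ε (i, j, k) ω * x k) (fun k => ε (i, j, k) ω * y k),
        Finset.sum_mul_sum Finset.univ Finset.univ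
          (fun k => ε (i, j', k) ω * x k) (fun k => ε (i, j', k) ω * y k),
        Finset.sum_mul_sum]
      refine Finset.sum_congr rfl fun a _ => ?_
      simp only [Finset.sum_mul, Finset.mul_sum]
      rw [Finset.sum_congr rfl fun b (_ : b ∈ (Finset.univ : Finset (Fin d))) =>
        (Finset.sum_comm :
        (∑ c, ∑ e, ε (i, j, a) ω * x a * (ε (i, j, e) ω * y e)
            * (ε (i, j', b) ω * x b * (ε (i, j', c) ω * y c)))
        = ∑ e, ∑ c, ε (i, j, a) ω * x a * (ε (i, j, e) ω * y e)
            * (ε (i, j', b) ω * x b * (ε (i, j', c) ω * y c)))]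
      rw [Finset.sum_comm]
      refine Finset.sum_congr rfl fun b _ => Finset.sum_congr rfl fun c _ =>
        Finset.sum_congr rfl fun e _ => by simp only [hE, hC]; ring
    rw [e1, Finset.prod_univ_sum
      (fun _ => (Finset.univ : Finset (Fin d × Fin d × Fin d × Fin d))), Fintype.piFinset_univ]
    exact Finset.sum_congr rfl fun h _ => Finset.prod_mul_distrib
  -- integrability
  have hEmeas : ∀ h : Fin n → Fin d × Fin d × Fin d × Fin d,
      Measurable fun ω => ∏ i, Epart i (h i) ω := fun h =>
    Finset.measurable_prod _ fun i _ =>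
      (((hmeas _).mul (hmeas _)).mul (hmeas _)).mul (hmeas _)
  have hEbd : ∀ (h : Fin n → Fin d × Fin d × Fin d × Fin d) ω,
      |∏ i, Epart i (h i) ω| ≤ 1 := by
    intro h ω
    rw [Finset.abs_prod]
    refine Finset.prod_le_one (fun i _ => abs_nonneg _) fun i _ => ?_
    simp only [hE, abs_mul, habs]
    norm_num
  have hEint : ∀ h : Fin n → Fin d × Fin d × Fin d × Fin d,
      Integrable (fun ω => (∏ i, Epart i (h i) ω) * (∏ i, Cpart (h i))) ℙ := fun h =>
    (RSaux_integrable_of_bound (hEmeas h) 1 (hEbd h)).mul_const _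
  -- moment computation per h
  have hM : ∀ h : Fin n → Fin d × Fin d × Fin d × Fin d,
      ∫ ω, ∏ i, Epart i (h i) ω = ∏ i, Wpart (h i) := by
    intro h
    set m : Fin n × Fin D × Fin d → ℕ := fun p =>
      (if p.2 = (j, (h p.1).1) then 1 else 0) + (if p.2 = (j, (h p.1).2.1) then 1 else 0)
      + (if p.2 = (j', (h p.1).2.2.1) then 1 else 0)
      + (if p.2 = (j', (h p.1).2.2.2) then 1 else 0) with hm_def
    have canon : (fun ω => ∏ i, Epart i (h i) ω) = fun ω => ∏ p, ε p ω ^ m p := by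
      funext ω
      rw [Fintype.prod_prod_type (fun p : Fin n × (Fin D × Fin d) => ε p ω ^ m p)]
      refine Finset.prod_congr rfl fun i _ => ?_
      simp only [hm_def, pow_add, Finset.prod_mul_distrib]
      rw [RSaux_prod_pow_ite (fun r => ε (i, r) ω) (j, (h i).1),
        RSaux_prod_pow_ite (fun r => ε (i, r) ω) (j, (h i).2.1),
        RSaux_prod_pow_ite (fun r => ε (i, r) ω) (j', (h i).2.2.1),
        RSaux_prod_pow_ite (fun r => ε (i, r) ω) (j', (h i).2.2.2)]
    rw [show (∫ ω, ∏ i, Epart i (h i) ω) = ∫ ω, ∏ p, ε p ω ^ m p by rw [canon],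
      RSaux_mom hindep hmeas hsign hmean m,
      Fintype.prod_prod_type (fun p : Fin n × (Fin D × Fin d) => if Even (m p) then (1:ℝ) else 0)]
    refine Finset.prod_congr rfl fun i _ => ?_
    simpa only [hm_def] using
      RSaux_quadProd ((j, (h i).1) : Fin D × Fin d) (j, (h i).2.1) (j', (h i).2.2.1)
        (j', (h i).2.2.2)
  -- assemble
  rw [integral_congr_ae (Filter.Eventually.of_forall hpoint),
    integral_finset_sum _ fun h _ => hEint h]
  have step : ∀ h : Fin n → Fin d × Fin d × Fin d × Fin d,
      (∫ ω, (∏ i, Epart i (h i) ω) * (∏ i, Cpart (h i)))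
        = ∏ i, (Wpart (h i) * Cpart (h i)) := by
    intro h
    rw [integral_mul_const, hM h, ← Finset.prod_mul_distrib]
  simp only [step]
  have fold : (∑ h : Fin n → Fin d × Fin d × Fin d × Fin d, ∏ i, (Wpart (h i) * Cpart (h i)))
      = ∏ i : Fin n, (∑ q : Fin d × Fin d × Fin d × Fin d, Wpart q * Cpart q) := by
    rw [Finset.prod_univ_sum (fun _ => (Finset.univ : Finset (Fin d × Fin d × Fin d × Fin d))),
      Fintype.piFinset_univ]
  rw [fold]
  have inner : (∑ q : Fin d × Fin d × Fin d × Fin d, Wpart q * Cpart q)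
      = if j = j' then
          (∑ k, x k ^ 2) * (∑ k, y k ^ 2) + 2 * ((∑ k, x k * y k) ^ 2 - ∑ k, x k ^ 2 * y k ^ 2)
        else (∑ k, x k * y k) ^ 2 := by
    by_cases hjj : j = j'
    · subst hjj
      rw [if_pos rfl, ← RSaux_quadSum x y]
      simp only [hW, hC, Fintype.sum_prod_type, Prod.mk.injEq, true_and]
    · rw [if_neg hjj, ← RSaux_pairSum2 x y]
      simp only [hW, hC, Fintype.sum_prod_type, Prod.mk.injEq, hjj, false_and, if_false,
        true_and, zero_mul, mul_zero, add_zero, zero_add, sub_zero, mul_one, one_mul]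
  rw [inner]
  simp [Finset.prod_const]

end RSauxiliary

/-- variance of the Rademacher polynomial sketch. If the `Wᵢ` have
    i.i.d. `Unif({-1,+1})` entries, then
    `Var[φₙ(x)ᵀφₙ(y)] = D⁻¹[(‖x‖²‖y‖² + 2(⟨x,y⟩² − ∑_k x_k²y_k²))ⁿ − ⟨x,y⟩^{2n}]`. -/
theorem rademacher_sketch_variance
    {Ω : Type*} [MeasureSpace Ω] [IsProbabilityMeasure (ℙ : Measure Ω)]
    (n D d : ℕ) (hD : 0 < D)
    (W : Fin n → Ω → Matrix (Fin D) (Fin d) ℝ)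
    (hmeas : ∀ i j k, Measurable fun ω => W i ω j k)
    (hindep : iIndepFun
      (fun p : Fin n × Fin D × Fin d => fun ω => W p.1 ω p.2.1 p.2.2) ℙ)
    (hsign : ∀ i ω j k, W i ω j k = 1 ∨ W i ω j k = -1)
    (hmean : ∀ i j k, ∫ ω, W i ω j k = 0)
    (x y : Fin d → ℝ) :
    variance (fun ω => (∑ j : Fin D,
        (∏ i : Fin n, ∑ k : Fin d, W i ω j k * x k) *
        (∏ i : Fin n, ∑ k : Fin d, W i ω j k * y k)) / D) ℙ =
      (D : ℝ)⁻¹ *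
        (((∑ k, x k ^ 2) * (∑ k, y k ^ 2) +
            2 * ((∑ k, x k * y k) ^ 2 - ∑ k, x k ^ 2 * y k ^ 2)) ^ n -
          (∑ k, x k * y k) ^ (2 * n)) := by
  classical
  set ε : Fin n × Fin D × Fin d → Ω → ℝ := fun p ω => W p.1 ω p.2.1 p.2.2 with hεdef
  have hεmeas : ∀ p, Measurable (ε p) := fun p => hmeas p.1 p.2.1 p.2.2
  have hεsign : ∀ p ω, ε p ω = 1 ∨ ε p ω = -1 := fun p ω => hsign p.1 ω p.2.1 p.2.2
  have hεmean : ∀ p, ∫ ω, ε p ω = 0 := fun p => hmean p.1 p.2.1 p.2.2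
  have hεindep : iIndepFun ε ℙ := hindep
  have habs : ∀ p ω, |ε p ω| = 1 := fun p ω => by rcases hεsign p ω with h | h <;> simp [h]
  set S : Fin D → Ω → ℝ := fun j ω =>
    (∏ i, ∑ k, ε (i, j, k) ω * x k) * (∏ i, ∑ k, ε (i, j, k) ω * y k) with hSdef
  set B : ℝ := ∑ k, x k * y k with hB
  set A : ℝ := (∑ k, x k ^ 2) * (∑ k, y k ^ 2) + 2 * (B ^ 2 - ∑ k, x k ^ 2 * y k ^ 2) with hA
  set Z : Ω → ℝ := fun ω => (∑ j, S j ω) / D with hZdef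
  -- measurability and bounds
  have hSmeas : ∀ j, Measurable (S j) := fun j =>
    (Finset.measurable_prod _ fun i _ => Finset.measurable_sum _ fun k _ =>
      (hεmeas (i, j, k)).mul_const _).mul
    (Finset.measurable_prod _ fun i _ => Finset.measurable_sum _ fun k _ =>
      (hεmeas (i, j, k)).mul_const _)
  set Cx : ℝ := ∑ k, |x k| with hCx
  set Cy : ℝ := ∑ k, |y k| with hCy
  have hCx0 : 0 ≤ Cx := Finset.sum_nonneg fun k _ => abs_nonneg _
  have hCy0 : 0 ≤ Cy := Finset.sum_nonneg fun k _ => abs_nonneg _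
  have hsum_bd : ∀ (v : Fin d → ℝ) i j ω, |∑ k, ε (i, j, k) ω * v k| ≤ ∑ k, |v k| := by
    intro v i j ω
    refine (Finset.abs_sum_le_sum_abs _ _).trans (le_of_eq ?_)
    exact Finset.sum_congr rfl fun k _ => by rw [abs_mul, habs, one_mul]
  have hprod_bd : ∀ (v : Fin d → ℝ) j ω, |∏ i : Fin n, ∑ k, ε (i, j, k) ω * v k|
      ≤ (∑ k, |v k|) ^ n := by
    intro v j ω
    rw [Finset.abs_prod]
    calc ∏ i : Fin n, |∑ k, ε (i, j, k) ω * v k| ≤ ∏ _i : Fin n, (∑ k, |v k|) :=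
          Finset.prod_le_prod (fun i _ => abs_nonneg _) fun i _ => hsum_bd v i j ω
      _ = (∑ k, |v k|) ^ n := by simp [Finset.prod_const]
  have hSbd : ∀ j ω, |S j ω| ≤ Cx ^ n * Cy ^ n := by
    intro j ω
    rw [hSdef, abs_mul]
    exact mul_le_mul (hprod_bd x j ω) (hprod_bd y j ω) (abs_nonneg _) (pow_nonneg hCx0 n)
  have hC0 : 0 ≤ Cx ^ n * Cy ^ n := mul_nonneg (pow_nonneg hCx0 n) (pow_nonneg hCy0 n)
  have hSint : ∀ j, Integrable (S j) ℙ := fun j =>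
    RSaux_integrable_of_bound (hSmeas j) _ (hSbd j)
  have hSSint : ∀ j j', Integrable (fun ω => S j ω * S j' ω) ℙ := by
    intro j j'
    refine RSaux_integrable_of_bound ((hSmeas j).mul (hSmeas j'))
      ((Cx ^ n * Cy ^ n) * (Cx ^ n * Cy ^ n)) fun ω => ?_
    rw [abs_mul]
    exact mul_le_mul (hSbd j ω) (hSbd j' ω) (abs_nonneg _) hC0
  have hZmeas : Measurable Z := (Finset.measurable_sum _ fun j _ => hSmeas j).div_const _
  have hD0 : (0:ℝ) < D := by exact_mod_cast hD
  have hZbd : ∀ ω, |Z ω| ≤ Cx ^ n * Cy ^ n := by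
    intro ω
    rw [hZdef, abs_div, abs_of_pos hD0, div_le_iff₀ hD0]
    calc |∑ j, S j ω| ≤ ∑ j, |S j ω| := Finset.abs_sum_le_sum_abs _ _
      _ ≤ ∑ _j : Fin D, Cx ^ n * Cy ^ n := Finset.sum_le_sum fun j _ => hSbd j ω
      _ = D * (Cx ^ n * Cy ^ n) := by simp [Finset.sum_const, mul_comm]
      _ = Cx ^ n * Cy ^ n * D := by ring
  have hZmem : MemLp Z 2 ℙ := by
    refine (memLp_top_of_bound hZmeas.aestronglyMeasurable (Cx ^ n * Cy ^ n)
      (Filter.Eventually.of_forall fun ω => ?_)).mono_exponent le_top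
    simpa [Real.norm_eq_abs] using hZbd ω
  -- expectations
  have hEZ : ∫ ω, Z ω = B ^ n := by
    rw [hZdef]
    simp only [integral_div]
    rw [integral_finset_sum _ fun j _ => hSint j]
    have : ∀ j : Fin D, ∫ ω, S j ω = B ^ n := fun j =>
      RSaux_ES hεindep hεmeas hεsign hεmean x y j
    simp only [this, Finset.sum_const, Finset.card_univ, Fintype.card_fin, nsmul_eq_mul]
    field_simp
  have hESS : ∀ j j', ∫ ω, S j ω * S j' ω = if j = j' then A ^ n else (B ^ 2) ^ n := by
    intro j j'
    have := RSaux_ESS hεindep hεmeas hεsign hεmean x y j j'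
    rw [hSdef]
    simp only [hεdef] at this ⊢
    rw [this, apply_ite (· ^ n)]
  have hEZ2 : ∫ ω, (Z ^ 2) ω = (D * A ^ n + (D^2 - D) * (B ^ 2) ^ n) / D ^ 2 := by
    have hz2 : ∀ ω, (Z ^ 2) ω = (∑ j, ∑ j', S j ω * S j' ω) / D ^ 2 := by
      intro ω
      rw [Pi.pow_apply, hZdef, div_pow, sq, Finset.sum_mul_sum]
    rw [integral_congr_ae (Filter.Eventually.of_forall hz2)]
    simp only [integral_div]
    rw [integral_finset_sum _ fun j _ => (integrable_finset_sum _ fun j' _ => hSSint j j'),]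
    have : ∀ j : Fin D, ∫ ω, ∑ j', S j ω * S j' ω
        = ∑ j' : Fin D, if j = j' then A ^ n else (B ^ 2) ^ n := by
      intro j
      rw [integral_finset_sum _ fun j' _ => hSSint j j']
      exact Finset.sum_congr rfl fun j' _ => hESS j j'
    simp only [this]
    have inner : ∀ j : Fin D, (∑ j' : Fin D, if j = j' then A ^ n else (B ^ 2) ^ n)
        = D * (B ^ 2) ^ n + (A ^ n - (B ^ 2) ^ n) := by
      intro j
      have : ∀ j' : Fin D, (if j = j' then A ^ n else (B ^ 2) ^ n)
          = (B ^ 2) ^ n + (if j = j' then A ^ n - (B ^ 2) ^ n else 0) := by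
        intro j'; split <;> ring
      simp only [this, Finset.sum_add_distrib, Finset.sum_const, Finset.card_univ,
        Fintype.card_fin, nsmul_eq_mul, Finset.sum_ite_eq, Finset.mem_univ, if_true]
    simp only [inner, Finset.sum_const, Finset.card_univ, Fintype.card_fin, nsmul_eq_mul]
    ring
  -- conclude
  rw [show variance (fun ω => (∑ j : Fin D,
        (∏ i : Fin n, ∑ k : Fin d, W i ω j k * x k) *
        (∏ i : Fin n, ∑ k : Fin d, W i ω j k * y k)) / D) ℙ = variance Z ℙ from rfl]
  rw [variance_eq_sub hZmem, hEZ, hEZ2]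
  have hBn : (B ^ n) ^ 2 = (B ^ 2) ^ n := by ring
  have hB2n : B ^ (2 * n) = (B ^ 2) ^ n := by rw [pow_mul]
  rw [hBn, hB2n]
  have hDne : (D:ℝ) ≠ 0 := ne_of_gt hD0
  field_simp
  ring
end
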